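/- Every Menger proper K-analytic space is σ-compact. -/

import Mathlib

open Set Function TopologicalSpace MeasureTheory

universe u

/-- A space is analytic if it is a continuous image of the Baire space `ℕ → ℕ`. -/
def IsAnalyticSpace (X : Type*) [TopologicalSpace X] : Prop :=
  ∃ f : (ℕ → ℕ) → X, Continuous f ∧ Surjective f

/-- A space is Lusin if it is an injective continuous image of the Baire space. -/
def IsLusinSpace (X : Type*) [TopologicalSpace X] : Prop :=
  ∃ f : (ℕ → ℕ) → X, Continuous f ∧ Injective f ∧ Surjective f

/-- A map is perfect if it is continuous, closed, and has compact fibers. -/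
def IsPerfectMap {X Y : Type*} [TopologicalSpace X] [TopologicalSpace Y] (f : X → Y) : Prop :=
  Continuous f ∧ IsClosedMap f ∧ ∀ y : Y, IsCompact (f ⁻¹' {y})

/-- The remainder `βX \ X` of a space in its Stone–Čech compactification. -/
def StoneCechRemainder (X : Type u) [TopologicalSpace X] : Set (StoneCech X) :=
  (Set.range (stoneCechUnit : X → StoneCech X))ᶜ

/-- A space is co-analytic if its Stone–Čech remainder is analytic. -/
def CoAnalytic (X : Type u) [TopologicalSpace X] : Prop :=
  IsAnalyticSpace ↥(StoneCechRemainder X)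

/-- A space is Čech-complete if it is a `Gδ` subset of its Stone–Čech compactification. -/
def CechComplete (X : Type u) [TopologicalSpace X] : Prop :=
  IsGδ (Set.range (stoneCechUnit : X → StoneCech X))

/-- A space is K-analytic if it is a continuous image of a Lindelöf Čech-complete
(Tychonoff) space. -/
def KAnalytic (X : Type u) [TopologicalSpace X] : Prop :=
  ∃ (Y : Type u) (_ : TopologicalSpace Y) (_ : T35Space Y),
    LindelofSpace Y ∧ CechComplete Y ∧ ∃ f : Y → X, Continuous f ∧ Surjective f

/-- A space is K-Lusin if it is an injective continuous image of a Lindelöf Čech-complete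
(Tychonoff) space. -/
def KLusin (X : Type u) [TopologicalSpace X] : Prop :=
  ∃ (Y : Type u) (_ : TopologicalSpace Y) (_ : T35Space Y),
    LindelofSpace Y ∧ CechComplete Y ∧ ∃ f : Y → X, Continuous f ∧ Injective f ∧ Surjective f

/-- The Menger property. -/
def MengerSpace (X : Type*) [TopologicalSpace X] : Prop :=
  ∀ U : ℕ → Set (Set X), (∀ n, ∀ u ∈ U n, IsOpen u) → (∀ n, ⋃₀ U n = univ) →
    ∃ V : ℕ → Set (Set X), (∀ n, V n ⊆ U n ∧ (V n).Finite) ∧ ⋃₀ (⋃ n, V n) = univ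

/-- The Rothberger property. -/
def RothbergerSpace (X : Type*) [TopologicalSpace X] : Prop :=
  ∀ U : ℕ → Set (Set X), (∀ n, ∀ u ∈ U n, IsOpen u) → (∀ n, ⋃₀ U n = univ) →
    ∃ V : ℕ → Set X, (∀ n, V n ∈ U n) ∧ (⋃ n, V n) = univ

/-- A space is productively Lindelöf if its product with every Lindelöf (Tychonoff)
space is Lindelöf. -/
def ProductivelyLindelof (X : Type u) [TopologicalSpace X] : Prop :=
  ∀ (Y : Type u) (_ : TopologicalSpace Y) (_ : T35Space Y),
    LindelofSpace Y → LindelofSpace (X × Y)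

/-- A Michael space is a Lindelöf (Tychonoff) space whose product with the Baire space
is not Lindelöf. -/
def ExistsMichaelSpace : Prop :=
  ∃ (Y : Type u) (_ : TopologicalSpace Y) (_ : T35Space Y),
    LindelofSpace Y ∧ ¬ LindelofSpace (Y × (ℕ → ℕ))

/-- The Hurewicz property: every Čech-complete space in which `X` embeds contains a
σ-compact subspace containing the image of `X`. -/
def HurewiczSpace (X : Type u) [TopologicalSpace X] : Prop :=
  ∀ (Y : Type u) (_ : TopologicalSpace Y) (_ : T35Space Y), CechComplete Y →
    ∀ f : X → Y, Topology.IsEmbedding f → ∃ S : Set Y, IsSigmaCompact S ∧ range f ⊆ S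

/-- A space is projectively σ-compact if each of its continuous images in a separable
metrizable space is σ-compact. -/
def ProjectivelySigmaCompact (X : Type u) [TopologicalSpace X] : Prop :=
  ∀ (M : Type u) (_ : TopologicalSpace M) (_ : SeparableSpace M) (_ : MetrizableSpace M)
    (f : X → M), Continuous f → IsSigmaCompact (range f)

/-- A space is projectively countable if each of its continuous images in a separable
metrizable space is countable. -/
def ProjectivelyCountable (X : Type u) [TopologicalSpace X] : Prop :=
  ∀ (M : Type u) (_ : TopologicalSpace M) (_ : SeparableSpace M) (_ : MetrizableSpace M)
    (f : X → M), Continuous f → (range f).Countable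

/-- The Alster property. -/
def AlsterSpace (X : Type*) [TopologicalSpace X] : Prop :=
  ∀ G : Set (Set X), (∀ g ∈ G, IsGδ g) → ⋃₀ G = univ →
    (∀ K : Set X, IsCompact K → ∃ F : Set (Set X), F ⊆ G ∧ F.Finite ∧ K ⊆ ⋃₀ F) →
    ∃ C : Set (Set X), C ⊆ G ∧ C.Countable ∧ ⋃₀ C = univ

/-- A compact set has countable character if it has a countable neighborhood base of
open sets. -/
def HasCountableChar {X : Type*} [TopologicalSpace X] (L : Set X) : Prop :=
  ∃ B : ℕ → Set X, (∀ n, IsOpen (B n) ∧ L ⊆ B n) ∧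
    ∀ U : Set X, IsOpen U → L ⊆ U → ∃ n, B n ⊆ U

/-- A space is of countable type if every compact set is contained in a compact set
of countable character. -/
def CountableType (X : Type*) [TopologicalSpace X] : Prop :=
  ∀ K : Set X, IsCompact K → ∃ L : Set X, IsCompact L ∧ K ⊆ L ∧ HasCountableChar L

/-- A space is nowhere locally compact if no point has a compact neighborhood. -/
def NowhereLocallyCompact (X : Type*) [TopologicalSpace X] : Prop :=
  ∀ x : X, ∀ K ∈ nhds x, ¬ IsCompact (K : Set X)

/-- Weight at most `c`: there is a basis of cardinality at most `c`. -/
def WeightLE (X : Type u) [TopologicalSpace X] (c : Cardinal.{u}) : Prop :=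
  ∃ B : Set (Set X), IsTopologicalBasis B ∧ Cardinal.mk B ≤ c

/-- A space is Frolík if it is homeomorphic to a closed subspace of a countable product
of σ-compact (Tychonoff) spaces. -/
def FrolikSpace (X : Type u) [TopologicalSpace X] : Prop :=
  ∃ (Y : ℕ → Type u) (_ : ∀ n, TopologicalSpace (Y n)) (_ : ∀ n, T35Space (Y n))
    (_ : ∀ n, SigmaCompactSpace (Y n)) (C : Set (∀ n, Y n)),
    IsClosed C ∧ Nonempty (X ≃ₜ ↥C)

/-- An s-space: some compactification has a countable open source for `X`. -/
def SSpace (X : Type u) [TopologicalSpace X] : Prop :=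
  ∃ (K : Type u) (_ : TopologicalSpace K) (_ : CompactSpace K) (_ : T2Space K)
    (e : X → K), Topology.IsEmbedding e ∧ DenseRange e ∧
      ∃ S : Set (Set K), S.Countable ∧ (∀ s ∈ S, IsOpen s) ∧
        ∃ F : Set (Set (Set K)), (∀ T ∈ F, T ⊆ S ∧ T.Nonempty) ∧
          range e = ⋃ T ∈ F, ⋂₀ T

/-- A space is Lindelöf p if it admits a perfect map onto a separable metrizable space. -/
def LindelofP (X : Type u) [TopologicalSpace X] : Prop :=
  ∃ (M : Type u) (_ : TopologicalSpace M) (_ : SeparableSpace M) (_ : MetrizableSpace M)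
    (f : X → M), IsPerfectMap f ∧ Surjective f

/-- A space is proper K-analytic if it admits a perfect map onto an analytic subspace
of `ℝ^ω`. -/
def ProperKAnalytic (X : Type u) [TopologicalSpace X] : Prop :=
  ∃ A : Set (ℕ → ℝ), IsAnalyticSpace ↥A ∧ ∃ f : X → ↥A, IsPerfectMap f ∧ Surjective f

/-- A space is proper K-Lusin if it admits a perfect map onto a Lusin subspace of `ℝ^ω`. -/
def ProperKLusin (X : Type u) [TopologicalSpace X] : Prop :=
  ∃ A : Set (ℕ → ℝ), IsLusinSpace ↥A ∧ ∃ f : X → ↥A, IsPerfectMap f ∧ Surjective f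

/-- A space is absolute Borel if, viewed as a subset of its Stone–Čech compactification,
it belongs to the σ-algebra generated by the closed sets. -/
def AbsoluteBorel (X : Type u) [TopologicalSpace X] : Prop :=
  MeasurableSet[MeasurableSpace.generateFrom {s : Set (StoneCech X) | IsClosed s}]
    (Set.range (stoneCechUnit : X → StoneCech X))


/- ========================= Auxiliary development ========================= -/

namespace MengerAux

open Metric Filter Topology
open scoped Classical

/-! ### Generic helpers -/

lemma pos_lb {T : Finset ℕ} {d : ℕ → ℝ} (h : ∀ j ∈ T, 0 < d j) :
    ∃ δ : ℝ, 0 < δ ∧ ∀ j ∈ T, δ ≤ d j := by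
  rcases T.eq_empty_or_nonempty with rfl | hT
  · exact ⟨1, one_pos, by simp⟩
  · obtain ⟨j0, hj0, hmin⟩ := T.exists_min_image d hT
    exact ⟨d j0, h _ hj0, hmin⟩

lemma exists_inj_subseq {α : Type*} (z : ℕ → α) (hfib : ∀ v, {j | z j = v}.Finite) :
    ∃ φ : ℕ → ℕ, StrictMono φ ∧ Injective (z ∘ φ) := by
  have key : ∀ n : ℕ, ∃ j, n < j ∧ ∀ i ≤ n, z j ≠ z i := by
    intro n
    by_contra h
    push_neg at h
    have hsub : {j | n < j} ⊆ ⋃ i ∈ Finset.range (n + 1), {j | z j = z i} := by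
      intro j hj
      obtain ⟨i, hi, he⟩ := h j hj
      exact Set.mem_biUnion (Finset.mem_coe.mpr (Finset.mem_range.mpr (Nat.lt_succ_of_le hi))) he
    have hfin : ({j | n < j} : Set ℕ).Finite :=
      (Set.Finite.biUnion (Finset.range (n + 1)).finite_toSet (fun i _ => hfib (z i))).subset hsub
    exact (Set.Ioi_infinite n) hfin
  choose nxt hlt hne using key
  let φ : ℕ → ℕ := fun k => Nat.rec 0 (fun _ p => nxt p) k
  have hstep : ∀ k, φ k < φ (k + 1) := fun k => hlt (φ k)
  have hmono : StrictMono φ := strictMono_nat_of_lt_succ hstep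
  refine ⟨φ, hmono, ?_⟩
  have hup : ∀ k m, k ≤ m → z (φ (m + 1)) ≠ z (φ k) :=
    fun k m hkm => hne (φ m) (φ k) (hmono.monotone hkm)
  intro a b hab
  by_contra hne'
  rcases lt_trichotomy a b with h | h | h
  · obtain ⟨m, rfl⟩ := Nat.exists_eq_add_of_lt h
    exact hup a (a + m) (by omega) (by simpa [Function.comp] using hab.symm)
  · exact hne' h
  · obtain ⟨m, rfl⟩ := Nat.exists_eq_add_of_lt h
    exact hup b (b + m) (by omega) (by simpa [Function.comp] using hab)

/-! ### Cylinders in the Baire space -/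

/-- Cylinder determined by a finite sequence. -/
def Cyl (s : List ℕ) : Set (ℕ → ℕ) := {x | ∀ i < s.length, x i = s.getD i 0}

lemma getD_of_prefix {u v : List ℕ} (h : u <+: v) {i : ℕ} (hi : i < u.length) :
    v.getD i 0 = u.getD i 0 := by
  rw [List.getD_eq_getElem _ _ hi, List.getD_eq_getElem _ _ (hi.trans_le h.length_le)]
  exact (List.IsPrefix.getElem h hi).symm

lemma Cyl_anti {u v : List ℕ} (h : u <+: v) : Cyl v ⊆ Cyl u := by
  intro x hx i hi
  rw [hx i (hi.trans_le h.length_le), getD_of_prefix h hi]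

/-- The initial segment of `y` of length `m`, as a list. -/
def initL (y : ℕ → ℕ) (m : ℕ) : List ℕ := List.ofFn (fun i : Fin m => y i)

lemma length_initL (y : ℕ → ℕ) (m : ℕ) : (initL y m).length = m := by simp [initL]

lemma getD_initL {y : ℕ → ℕ} {m i : ℕ} (h : i < m) : (initL y m).getD i 0 = y i := by
  have h' : i < (initL y m).length := by rw [length_initL]; exact h
  rw [List.getD_eq_getElem _ _ h']
  simp [initL]

lemma self_mem_initL (y : ℕ → ℕ) (m : ℕ) : y ∈ Cyl (initL y m) := by
  intro i hi
  rw [length_initL] at hi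
  exact (getD_initL hi).symm

lemma prefix_initL {u : List ℕ} {y : ℕ → ℕ} (hy : y ∈ Cyl u) {m : ℕ} (hm : u.length ≤ m) :
    u <+: initL y m := by
  rw [List.prefix_iff_eq_take]
  refine List.ext_getElem ?_ ?_
  · rw [List.length_take, length_initL]
    omega
  · intro n h1 h2
    have hn : n < u.length := h1
    have hnm : n < m := lt_of_lt_of_le hn hm
    have h3 : n < (initL y m).length := by rw [length_initL]; exact hnm
    rw [List.getElem_take]
    have := hy n hn
    rw [List.getD_eq_getElem _ _ hn] at this
    have h4 : (initL y m)[n] = y n := by simp [initL]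
    rw [h4, ← this]

section Core

universe v

variable {P : Type v} [MetricSpace P]

variable (g : (ℕ → ℕ) → P) (A : Set P)

/-- `s` is good if the image of its cylinder is contained in a σ-compact subset of `A`. -/
def good (s : List ℕ) : Prop :=
  ∃ F : Set P, IsSigmaCompact F ∧ F ⊆ A ∧ g '' Cyl s ⊆ F

noncomputable def Fsel (s : List ℕ) : Set P := if h : good g A s then h.choose else ∅

/-- A global σ-compact subset of `A` absorbing all good cylinders. -/
def Fstar : Set P := ⋃ s : List ℕ, Fsel g A s

lemma Fsel_spec {s : List ℕ} (h : good g A s) :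
    IsSigmaCompact (Fsel g A s) ∧ Fsel g A s ⊆ A ∧ g '' Cyl s ⊆ Fsel g A s := by
  rw [Fsel, dif_pos h]; exact h.choose_spec

lemma Fsel_sigma (s : List ℕ) : IsSigmaCompact (Fsel g A s) := by
  by_cases h : good g A s
  · exact (Fsel_spec g A h).1
  · rw [Fsel, dif_neg h]; exact isSigmaCompact_empty

lemma Fsel_subA (s : List ℕ) : Fsel g A s ⊆ A := by
  by_cases h : good g A s
  · exact (Fsel_spec g A h).2.1
  · rw [Fsel, dif_neg h]; exact Set.empty_subset _

lemma Fstar_sigma : IsSigmaCompact (Fstar g A) :=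
  isSigmaCompact_iUnion _ (Fsel_sigma g A)

lemma Fstar_subA : Fstar g A ⊆ A := Set.iUnion_subset (Fsel_subA g A)

lemma good_sub_Fstar {s : List ℕ} (h : good g A s) : g '' Cyl s ⊆ Fstar g A :=
  (Fsel_spec g A h).2.2.trans (Set.subset_iUnion (Fsel g A) s)

lemma sigmaCompact_union {s t : Set P} (hs : IsSigmaCompact s) (ht : IsSigmaCompact t) :
    IsSigmaCompact (s ∪ t) := by
  rw [Set.union_eq_iUnion]
  exact isSigmaCompact_iUnion _ (fun b => by cases b <;> simpa)

/-- Continuity of `g` at a point gives a basic cylinder with small image. -/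
lemma cont_small (hg : Continuous g) (y : ℕ → ℕ) {ε : ℝ} (hε : 0 < ε) (m₀ : ℕ) :
    ∃ m, m₀ ≤ m ∧ g '' Cyl (initL y m) ⊆ ball (g y) ε := by
  have hopen : IsOpen (g ⁻¹' ball (g y) ε) := isOpen_ball.preimage hg
  have hy : y ∈ g ⁻¹' ball (g y) ε := by simp [hε]
  obtain ⟨I, v, hIv, hsub⟩ := isOpen_pi_iff.mp hopen y hy
  refine ⟨max m₀ (I.sup id + 1), le_max_left _ _, ?_⟩
  rintro - ⟨x, hx, rfl⟩
  have hxv : x ∈ (I : Set ℕ).pi v := by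
    intro a ha
    have h1 : a < max m₀ (I.sup id + 1) :=
      lt_of_lt_of_le (Nat.lt_succ_of_le (Finset.le_sup (f := id) ha)) (le_max_right _ _)
    have h2 := hx a (by rw [length_initL]; exact h1)
    rw [getD_initL h1] at h2
    rw [h2]; exact (hIv a ha).2
  exact hsub hxv

/-- From a set not covered by any σ-compact subset of `A`, extract an injective
sequence with no cluster point in `A`. -/
lemma exists_discrete_seq (S : Set P) (hSA : S ⊆ A)
    (hnc : ¬ ∃ F : Set P, IsSigmaCompact F ∧ F ⊆ A ∧ S ⊆ F) :
    ∃ w : ℕ → P, (∀ k, w k ∈ S) ∧ Injective w ∧ ∀ a ∈ A, ¬ MapClusterPt a atTop w := by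
  by_contra hcon
  push_neg at hcon
  have claim : ∀ z : ℕ → P, (∀ k, z k ∈ S) → ∃ a ∈ A, MapClusterPt a atTop z := by
    intro z hz
    by_cases hf : ∀ v, {j | z j = v}.Finite
    · obtain ⟨φ, hφ, hinj⟩ := exists_inj_subseq z hf
      obtain ⟨a, haA, hacl⟩ := hcon (z ∘ φ) (fun k => hz _) hinj
      refine ⟨a, haA, ?_⟩
      rw [mapClusterPt_iff_frequently] at hacl ⊢
      intro s hs
      have hacl' := hacl s hs
      rw [frequently_atTop] at hacl' ⊢
      intro N
      obtain ⟨k, hk, hks⟩ := hacl' N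
      exact ⟨φ k, le_trans hk (hφ.le_apply), hks⟩
    · push_neg at hf
      obtain ⟨v, hv⟩ := hf
      have hv' : {j | z j = v}.Infinite := hv
      have hvS : v ∈ S := by
        obtain ⟨j, hj⟩ := hv'.nonempty
        exact hj ▸ hz j
      refine ⟨v, hSA hvS, ?_⟩
      rw [mapClusterPt_iff_frequently]
      intro s hs
      rw [frequently_atTop]
      intro N
      obtain ⟨j, hjv, hjN⟩ := hv'.exists_gt N
      exact ⟨j, le_of_lt hjN, by rw [Set.mem_setOf_eq] at hjv; rw [hjv]; exact mem_of_mem_nhds hs⟩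
  apply hnc
  have hCA : closure S ⊆ A := by
    intro x hx
    obtain ⟨zz, hzz, hzt⟩ := mem_closure_iff_seq_limit.mp hx
    obtain ⟨a, haA, hacl⟩ := claim zz hzz
    have hmap : Filter.map zz atTop ≤ nhds x := hzt
    have hacl2 : ClusterPt a (Filter.map zz atTop) := hacl
    have hcl : ClusterPt a (nhds x) := hacl2.mono hmap
    have : a = x := t2_iff_nhds.mp inferInstance hcl
    exact this ▸ haA
  have hC : IsCompact (closure S) := by
    apply IsSeqCompact.isCompact
    intro x hx
    have hz : ∀ n : ℕ, ∃ zn ∈ S, dist (x n) zn < 1 / (n + 1) :=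
      fun n => Metric.mem_closure_iff.mp (hx n) _ (by positivity)
    choose zz hzS hzd using hz
    obtain ⟨a, haA, hacl⟩ := claim zz hzS
    obtain ⟨φ, hφ, hφt⟩ := TopologicalSpace.FirstCountableTopology.tendsto_subseq hacl
    refine ⟨a, ?_, φ, hφ, ?_⟩
    · exact mem_closure_of_tendsto hφt (Filter.Eventually.of_forall (fun n => hzS (φ n)))
    · rw [Metric.tendsto_atTop] at hφt ⊢
      intro ε hε
      obtain ⟨N1, hN1⟩ := hφt (ε / 2) (by positivity)
      obtain ⟨N2, hN2⟩ := exists_nat_gt (2 / ε)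
      refine ⟨max N1 N2, fun n hn => ?_⟩
      have hn1 : N1 ≤ n := le_trans (le_max_left _ _) hn
      have hn2 : N2 ≤ n := le_trans (le_max_right _ _) hn
      have hd1 : dist (zz (φ n)) a < ε / 2 := hN1 n hn1
      have hd2 : dist (x (φ n)) (zz (φ n)) < 1 / (φ n + 1) := hzd (φ n)
      have hφn : (n : ℝ) ≤ (φ n : ℝ) := by exact_mod_cast hφ.le_apply
      have hpos : (0:ℝ) < (n:ℝ) + 1 := by positivity
      have h3 : (1:ℝ) / (φ n + 1) ≤ 1 / (n + 1) := by
        apply div_le_div_of_nonneg_left one_pos.le hpos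
        linarith
      have h4 : (2 / ε : ℝ) < (n:ℝ) + 1 := by
        have : (N2 : ℝ) ≤ n := by exact_mod_cast hn2
        linarith
      have h5 : (1:ℝ) / (n + 1) < ε / 2 := by
        rw [div_lt_div_iff₀ hpos (by norm_num : (0:ℝ) < 2)]
        have hε2 : (0:ℝ) < ε := hε
        calc (1:ℝ) * 2 = 2 := by ring
          _ < ε * ((n:ℝ) + 1) := by
              rw [div_lt_iff₀ hε2] at h4
              linarith [h4]
          _ = ε * (n + 1) := by ring
      calc dist (x (φ n)) a ≤ dist (x (φ n)) (zz (φ n)) + dist (zz (φ n)) a := dist_triangle _ _ _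
        _ < 1 / (φ n + 1) + ε / 2 := by linarith
        _ ≤ 1 / (n + 1) + ε / 2 := by linarith
        _ < ε / 2 + ε / 2 := by linarith
        _ = ε := by ring
  exact ⟨closure S, hC.isSigmaCompact, hCA, subset_closure⟩

/-- Specification of the children of a node. -/
structure Sp (u0 : List ℕ) (W : Set P) (rb : ℝ) (c : ℕ → List ℕ × P × ℝ) : Prop where
  bad : ∀ i, ¬ good g A (c i).1
  pre : ∀ i, u0 <+: (c i).1
  len : ∀ i, u0.length < (c i).1.length
  rpos : ∀ i, 0 < (c i).2.2
  rle : ∀ i, (c i).2.2 ≤ rb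
  rlei : ∀ i, (c i).2.2 ≤ 1 / (i + 1)
  img : ∀ i, g '' Cyl (c i).1 ⊆ ball (c i).2.1 (c i).2.2
  subW : ∀ i, ball (c i).2.1 (c i).2.2 ⊆ W
  disj : ∀ i j, i ≠ j → Disjoint (ball (c i).2.1 (c i).2.2) (ball (c j).2.1 (c j).2.2)
  nocl : ∀ a ∈ A, ¬ MapClusterPt a atTop (fun i => (c i).2.1)

/-- The key construction step: every bad node has infinitely many bad children
lying in small pairwise disjoint balls whose centers do not cluster in `A`. -/
lemma step (hg : Continuous g) (hgA : Set.range g = A) {u0 : List ℕ} (hu : ¬ good g A u0)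
    {W : Set P} (hW : IsOpen W) (hWu : g '' Cyl u0 ⊆ W) {rb : ℝ} (hrb : 0 < rb) :
    ∃ c : ℕ → List ℕ × P × ℝ, Sp g A u0 W rb c := by
  classical
  set S : Set P := g '' Cyl u0 \ Fstar g A with hS
  have hSsub : S ⊆ g '' Cyl u0 := Set.diff_subset
  have hSA : S ⊆ A := by
    intro p hp
    obtain ⟨x, _, rfl⟩ := hSsub hp
    exact hgA ▸ Set.mem_range_self x
  have hnc : ¬ ∃ F : Set P, IsSigmaCompact F ∧ F ⊆ A ∧ S ⊆ F := by
    rintro ⟨F, hF1, hF2, hF3⟩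
    apply hu
    refine ⟨F ∪ Fstar g A, sigmaCompact_union hF1 (Fstar_sigma g A),
      Set.union_subset hF2 (Fstar_subA g A), ?_⟩
    intro p hp
    by_cases h : p ∈ Fstar g A
    · exact Or.inr h
    · exact Or.inl (hF3 ⟨hp, h⟩)
  obtain ⟨w, hwS, hwInj, hwA⟩ := exists_discrete_seq A S hSA hnc
  have hsep : ∀ i : ℕ, ∃ δ, 0 < δ ∧ ∀ j, j ≠ i → δ ≤ dist (w i) (w j) := by
    intro i
    have hni : ¬ MapClusterPt (w i) atTop w := hwA _ (hSA (hwS i))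
    rw [mapClusterPt_iff_frequently] at hni
    push_neg at hni
    obtain ⟨s, hs, hfreq⟩ := hni
    obtain ⟨ε, hε, hball⟩ := Metric.mem_nhds_iff.mp hs
    obtain ⟨N, hN⟩ := Filter.eventually_atTop.mp hfreq
    obtain ⟨δ₀, hδ₀, hδ₀le⟩ := pos_lb (T := (Finset.range N).filter (· ≠ i))
      (d := fun j => dist (w i) (w j)) (fun j hj => by
        rw [Finset.mem_filter] at hj
        exact dist_pos.mpr (fun he => hj.2 (hwInj he.symm)))
    refine ⟨min ε δ₀, lt_min hε hδ₀, fun j hj => ?_⟩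
    rcases lt_or_ge j N with h | h
    · refine le_trans (min_le_right _ _) (hδ₀le j ?_)
      rw [Finset.mem_filter]
      exact ⟨Finset.mem_range.mpr h, hj⟩
    · have h1 := hN j h
      have h2 : w j ∉ ball (w i) ε := fun hin => h1 (hball hin)
      rw [mem_ball, not_lt] at h2
      calc min ε δ₀ ≤ ε := min_le_left _ _
        _ ≤ dist (w j) (w i) := h2
        _ = dist (w i) (w j) := dist_comm _ _
  choose δ hδpos hδ using hsep
  have hball : ∀ i : ℕ, ∃ η, 0 < η ∧ ball (w i) η ⊆ W := by
    intro i
    obtain ⟨η, hη, hsub⟩ := Metric.isOpen_iff.mp hW _ (hWu (hSsub (hwS i)))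
    exact ⟨η, hη, hsub⟩
  choose η hηpos hηsub using hball
  set ρ : ℕ → ℝ := fun i => min (min (δ i / 3) (η i)) (min rb (1 / (i + 1))) with hρ
  have hρpos : ∀ i, 0 < ρ i := by
    intro i
    have : (0:ℝ) < 1 / (i + 1) := by positivity
    exact lt_min (lt_min (by linarith [hδpos i]) (hηpos i)) (lt_min hrb this)
  have hcyl : ∀ i : ℕ, ∃ ui : List ℕ, (u0 <+: ui ∧ u0.length < ui.length) ∧
      g '' Cyl ui ⊆ ball (w i) (ρ i) ∧ w i ∈ g '' Cyl ui := by
    intro i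
    obtain ⟨y, hyc, hyg⟩ := hSsub (hwS i)
    obtain ⟨m, hm, hms⟩ := cont_small g hg y (hρpos i) (u0.length + 1)
    rw [hyg] at hms
    exact ⟨initL y m, ⟨prefix_initL hyc (by omega), by rw [length_initL]; omega⟩, hms,
      ⟨y, self_mem_initL y m, hyg⟩⟩
  choose ui hui himg hmem using hcyl
  refine ⟨fun i => (ui i, w i, ρ i), ?_, ?_, ?_, ?_, ?_, ?_, ?_, ?_, ?_, ?_⟩
  · intro i hgood
    exact (hwS i).2 (good_sub_Fstar g A hgood (hmem i))
  · exact fun i => (hui i).1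
  · exact fun i => (hui i).2
  · exact hρpos
  · exact fun i => le_trans (min_le_right _ _) (min_le_left _ _)
  · exact fun i => le_trans (min_le_right _ _) (min_le_right _ _)
  · exact himg
  · intro i
    exact le_trans (ball_subset_ball (le_trans (min_le_left _ _) (min_le_right _ _))) (hηsub i)
  · intro i j hij
    apply Metric.ball_disjoint_ball
    have h1 : δ i ≤ dist (w i) (w j) := hδ i j (Ne.symm hij)
    have h2 : δ j ≤ dist (w i) (w j) := by
      rw [dist_comm]
      exact hδ j i hij
    have h3 : ρ i ≤ δ i / 3 := le_trans (min_le_left _ _) (min_le_left _ _)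
    have h4 : ρ j ≤ δ j / 3 := le_trans (min_le_left _ _) (min_le_left _ _)
    have h5 : (0:ℝ) ≤ dist (w i) (w j) := dist_nonneg
    linarith
  · exact fun a ha => hwA a ha

section Construction

variable (hg : Continuous g) (hgA : Set.range g = A)

noncomputable def chil (d : List ℕ × P × ℝ) (W : Set P) (rb : ℝ) : ℕ → List ℕ × P × ℝ :=
  if h : ¬ good g A d.1 ∧ IsOpen W ∧ g '' Cyl d.1 ⊆ W ∧ 0 < rb then
    (step g A hg hgA h.1 h.2.1 h.2.2.1 h.2.2.2).choose
  else fun _ => (d.1, d.2.1, 1)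

lemma chil_spec {d : List ℕ × P × ℝ} {W : Set P} {rb : ℝ}
    (h1 : ¬ good g A d.1) (h2 : IsOpen W) (h3 : g '' Cyl d.1 ⊆ W) (h4 : 0 < rb) :
    Sp g A d.1 W rb (chil g A hg hgA d W rb) := by
  rw [chil, dif_pos ⟨h1, h2, h3, h4⟩]
  exact (step g A hg hgA h1 h2 h3 h4).choose_spec

/-- The reference open set of a node. -/
def Wof (d : List ℕ × P × ℝ) (t : List ℕ) : Set P :=
  if t = [] then Set.univ else ball d.2.1 d.2.2

lemma Wof_open (d : List ℕ × P × ℝ) (t : List ℕ) : IsOpen (Wof d t) := by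
  unfold Wof; split
  · exact isOpen_univ
  · exact isOpen_ball

/-- The tree of bad nodes, indexed by lists (children are obtained by `List.cons`). -/
noncomputable def D : List ℕ → List ℕ × P × ℝ
  | [] => ([], g (fun _ => 0), 1)
  | i :: t => chil g A hg hgA (D t) (Wof (D t) t) ((1/2 : ℝ) ^ (t.length + 1)) i

noncomputable def uD (t : List ℕ) : List ℕ := (D g A hg hgA t).1
noncomputable def zD (t : List ℕ) : P := (D g A hg hgA t).2.1
noncomputable def rD (t : List ℕ) : ℝ := (D g A hg hgA t).2.2

lemma inv (hnc : ¬ IsSigmaCompact A) : ∀ t : List ℕ,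
    ¬ good g A (D g A hg hgA t).1 ∧ g '' Cyl (D g A hg hgA t).1 ⊆ Wof (D g A hg hgA t) t := by
  intro t
  induction t with
  | nil =>
    constructor
    · rintro ⟨F, hF1, hF2, hF3⟩
      apply hnc
      have hAF : A ⊆ F := by
        rw [← hgA]
        rintro - ⟨x, rfl⟩
        exact hF3 ⟨x, fun i hi => by simp [D] at hi, rfl⟩
      have : A = F := le_antisymm hAF hF2
      rw [this]
      exact hF1
    · simp [Wof]
  | cons i t ih =>
    have hsp := chil_spec g A hg hgA ih.1 (Wof_open _ _) ih.2
      (by positivity : (0:ℝ) < (1/2 : ℝ) ^ (t.length + 1))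
    have he : D g A hg hgA (i :: t)
        = chil g A hg hgA (D g A hg hgA t) (Wof (D g A hg hgA t) t) ((1/2 : ℝ) ^ (t.length + 1)) i :=
      rfl
    constructor
    · rw [he]; exact hsp.bad i
    · rw [he]
      have hW : Wof (chil g A hg hgA (D g A hg hgA t) (Wof (D g A hg hgA t) t)
          ((1/2 : ℝ) ^ (t.length + 1)) i) (i :: t)
          = ball (chil g A hg hgA (D g A hg hgA t) (Wof (D g A hg hgA t) t)
            ((1/2 : ℝ) ^ (t.length + 1)) i).2.1
            (chil g A hg hgA (D g A hg hgA t) (Wof (D g A hg hgA t) t)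
            ((1/2 : ℝ) ^ (t.length + 1)) i).2.2 := by
        simp [Wof]
      rw [hW]
      exact hsp.img i

lemma Dspec (hnc : ¬ IsSigmaCompact A) (t : List ℕ) :
    Sp g A (D g A hg hgA t).1 (Wof (D g A hg hgA t) t) ((1/2 : ℝ) ^ (t.length + 1))
      (fun i => D g A hg hgA (i :: t)) :=
  chil_spec g A hg hgA (inv g A hg hgA hnc t).1 (Wof_open _ _) (inv g A hg hgA hnc t).2
    (by positivity)

/-- The node of level `n` along a branch `b`. -/
def idxL (b : ℕ → ℕ) : ℕ → List ℕ
  | 0 => []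
  | n + 1 => b n :: idxL b n

lemma idxL_len (b : ℕ → ℕ) : ∀ n, (idxL b n).length = n := by
  intro n
  induction n with
  | zero => rfl
  | succ n ih => simp [idxL, ih]

lemma chain (hnc : ¬ IsSigmaCompact A) (b : ℕ → ℕ) (n : ℕ) :
    uD g A hg hgA (idxL b n) <+: uD g A hg hgA (idxL b (n + 1)) :=
  (Dspec g A hg hgA hnc (idxL b n)).pre (b n)

lemma chain' (hnc : ¬ IsSigmaCompact A) (b : ℕ → ℕ) {m n : ℕ} (h : m ≤ n) :
    uD g A hg hgA (idxL b m) <+: uD g A hg hgA (idxL b n) := by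
  induction n with
  | zero =>
    have : m = 0 := Nat.le_zero.mp h
    rw [this]
  | succ n ih =>
    rcases Nat.le_succ_iff.mp h with h' | h'
    · exact (ih h').trans (chain g A hg hgA hnc b n)
    · rw [h']

lemma len_ge (hnc : ¬ IsSigmaCompact A) (b : ℕ → ℕ) : ∀ n, n ≤ (uD g A hg hgA (idxL b n)).length := by
  intro n
  induction n with
  | zero => exact Nat.zero_le _
  | succ n ih =>
    have h := (Dspec g A hg hgA hnc (idxL b n)).len (b n)
    have : (uD g A hg hgA (idxL b n)).length < (uD g A hg hgA (idxL b (n+1))).length := h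
    omega

/-- The branch point of the Baire space determined by `b`. -/
noncomputable def ybr (b : ℕ → ℕ) : ℕ → ℕ :=
  fun m => (uD g A hg hgA (idxL b (m + 1))).getD m 0

lemma ybr_mem (hnc : ¬ IsSigmaCompact A) (b : ℕ → ℕ) (n : ℕ) : ybr g A hg hgA b ∈ Cyl (uD g A hg hgA (idxL b n)) := by
  intro p hp
  have hlen : p < (uD g A hg hgA (idxL b (p + 1))).length :=
    lt_of_lt_of_le (Nat.lt_succ_self p) (len_ge g A hg hgA hnc b (p + 1))
  show (uD g A hg hgA (idxL b (p + 1))).getD p 0 = (uD g A hg hgA (idxL b n)).getD p 0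
  rcases le_total (p + 1) n with h | h
  · exact (getD_of_prefix (chain' g A hg hgA hnc b h) hlen).symm
  · exact getD_of_prefix (chain' g A hg hgA hnc b h) hp

/-- The limit map along branches. -/
noncomputable def fb (b : ℕ → ℕ) : P := g (ybr g A hg hgA b)

lemma fb_mem_ball (hnc : ¬ IsSigmaCompact A) (b : ℕ → ℕ) (n : ℕ) :
    fb g A hg hgA b ∈ ball (zD g A hg hgA (idxL b (n + 1))) (rD g A hg hgA (idxL b (n + 1))) := by
  have h2 := (inv g A hg hgA hnc (idxL b (n + 1))).2
  have hW : Wof (D g A hg hgA (idxL b (n + 1))) (idxL b (n + 1))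
      = ball (zD g A hg hgA (idxL b (n + 1))) (rD g A hg hgA (idxL b (n + 1))) := by
    simp [Wof, idxL, zD, rD]
  rw [hW] at h2
  exact h2 ⟨ybr g A hg hgA b, ybr_mem g A hg hgA hnc b (n + 1), rfl⟩

lemma fb_mem_A (b : ℕ → ℕ) : fb g A hg hgA b ∈ A := by
  have h : fb g A hg hgA b ∈ Set.range g := Set.mem_range_self _
  rwa [hgA] at h

lemma child_sub_parent (hnc : ¬ IsSigmaCompact A) (t : List ℕ) (ht : t ≠ []) (i : ℕ) :
    ball (zD g A hg hgA (i :: t)) (rD g A hg hgA (i :: t)) ⊆ ball (zD g A hg hgA t) (rD g A hg hgA t) := by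
  have h := (Dspec g A hg hgA hnc t).subW i
  have hW : Wof (D g A hg hgA t) t = ball (zD g A hg hgA t) (rD g A hg hgA t) := by
    simp [Wof, ht, zD, rD]
  rw [hW] at h
  exact h

lemma lvl_disj (hnc : ¬ IsSigmaCompact A) : ∀ n (t t' : List ℕ), t.length = n + 1 → t'.length = n + 1 → t ≠ t' →
    Disjoint (ball (zD g A hg hgA t) (rD g A hg hgA t)) (ball (zD g A hg hgA t') (rD g A hg hgA t')) := by
  intro n
  induction n with
  | zero =>
    intro t t' ht ht' hne
    obtain ⟨i, rfl⟩ : ∃ i, t = [i] := by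
      rcases t with _ | ⟨i, s⟩
      · simp at ht
      rcases s with _ | ⟨j, s⟩
      · exact ⟨i, rfl⟩
      · simp at ht
    obtain ⟨i', rfl⟩ : ∃ i', t' = [i'] := by
      rcases t' with _ | ⟨i', s'⟩
      · simp at ht'
      rcases s' with _ | ⟨j', s'⟩
      · exact ⟨i', rfl⟩
      · simp at ht'
    have hii : i ≠ i' := fun h => hne (by rw [h])
    exact (Dspec g A hg hgA hnc []).disj i i' hii
  | succ n ih =>
    intro t t' ht ht' hne
    obtain ⟨i, s, rfl⟩ : ∃ i s, t = i :: s := by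
      rcases t with _ | ⟨i, s⟩
      · simp at ht
      · exact ⟨i, s, rfl⟩
    obtain ⟨i', s', rfl⟩ : ∃ i' s', t' = i' :: s' := by
      rcases t' with _ | ⟨i', s'⟩
      · simp at ht'
      · exact ⟨i', s', rfl⟩
    have hs : s.length = n + 1 := by simpa using ht
    have hs' : s'.length = n + 1 := by simpa using ht'
    by_cases hss : s = s'
    · subst hss
      have hii : i ≠ i' := fun h => hne (by rw [h])
      exact (Dspec g A hg hgA hnc s).disj i i' hii
    · have h1 := child_sub_parent g A hg hgA hnc s (by rintro rfl; simp at hs) i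
      have h2 := child_sub_parent g A hg hgA hnc s' (by rintro rfl; simp at hs') i'
      exact (ih s s' hs hs' hss).mono h1 h2

/-- The set of branches passing through node `t`. -/
def Ext (t : List ℕ) : Set (ℕ → ℕ) := {b | idxL b t.length = t}

lemma Ext_nil : Ext ([] : List ℕ) = Set.univ := by
  ext b; simp [Ext, idxL]

lemma mem_Ext_cons_self {t : List ℕ} {b : ℕ → ℕ} (hb : b ∈ Ext t) :
    b ∈ Ext (b t.length :: t) := by
  show idxL b (t.length + 1) = b t.length :: t
  show b t.length :: idxL b t.length = b t.length :: t
  rw [hb]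

lemma fb_img_sub (hnc : ¬ IsSigmaCompact A) (t : List ℕ) (i : ℕ) :
    fb g A hg hgA '' Ext (i :: t) ⊆ ball (zD g A hg hgA (i :: t)) (rD g A hg hgA (i :: t)) := by
  rintro - ⟨b, hb, rfl⟩
  have h := fb_mem_ball g A hg hgA hnc b t.length
  have hb' : idxL b (t.length + 1) = i :: t := hb
  rwa [hb'] at h

lemma cstep (hnc : ¬ IsSigmaCompact A) {p : P} (hpA : p ∈ A) (t : List ℕ)
    (hp : p ∈ closure (fb g A hg hgA '' Ext t)) :
    ∃ i, p ∈ closure (fb g A hg hgA '' Ext (i :: t)) := by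
  by_contra hno
  push_neg at hno
  apply (Dspec g A hg hgA hnc t).nocl p hpA
  rw [mapClusterPt_iff_frequently]
  intro s hs
  obtain ⟨ε, hε, hball⟩ := Metric.mem_nhds_iff.mp hs
  rw [frequently_atTop]
  intro N
  set M := N + Nat.ceil (2 / ε) + 1 with hM
  have hδf : ∀ i : ℕ, ∃ δ, 0 < δ ∧ ∀ q ∈ fb g A hg hgA '' Ext (i :: t), δ ≤ dist p q := by
    intro i
    have hni := hno i
    rw [Metric.mem_closure_iff] at hni
    push_neg at hni
    obtain ⟨δ, hδ, h⟩ := hni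
    exact ⟨δ, hδ, fun q hq => h q hq⟩
  choose δf hδfpos hδfle using hδf
  obtain ⟨δ₀, hδ₀, hδ₀le⟩ := pos_lb (T := Finset.range M) (d := δf) (fun j _ => hδfpos j)
  have hδ''pos : (0:ℝ) < min (ε / 2) δ₀ := lt_min (by positivity) hδ₀
  obtain ⟨q, hq, hpq⟩ := Metric.mem_closure_iff.mp hp _ hδ''pos
  obtain ⟨b, hb, rfl⟩ := hq
  set i0 := b t.length with hi0
  have hbi : b ∈ Ext (i0 :: t) := mem_Ext_cons_self hb
  have hiM : M ≤ i0 := by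
    by_contra h
    push_neg at h
    have h1 := hδfle i0 (fb g A hg hgA b) ⟨b, hbi, rfl⟩
    have h2 : δ₀ ≤ δf i0 := hδ₀le i0 (Finset.mem_range.mpr h)
    have h3 : min (ε / 2) δ₀ ≤ δ₀ := min_le_right _ _
    linarith
  refine ⟨i0, by omega, ?_⟩
  apply hball
  have h1 : dist (fb g A hg hgA b) (zD g A hg hgA (i0 :: t)) < rD g A hg hgA (i0 :: t) := by
    have := fb_img_sub g A hg hgA hnc t i0 ⟨b, hbi, rfl⟩
    rwa [mem_ball] at this
  have h2 : rD g A hg hgA (i0 :: t) ≤ 1 / (i0 + 1) := (Dspec g A hg hgA hnc t).rlei i0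
  have h3 : (1:ℝ) / (i0 + 1) < ε / 2 := by
    have hc : (2 / ε : ℝ) ≤ Nat.ceil (2 / ε) := Nat.le_ceil _
    have hM2 : (Nat.ceil (2 / ε) : ℝ) < (i0 : ℝ) + 1 := by
      have : Nat.ceil (2 / ε) < i0 + 1 := by omega
      exact_mod_cast this
    have h4 : (2 / ε : ℝ) < (i0 : ℝ) + 1 := lt_of_le_of_lt hc hM2
    rw [div_lt_div_iff₀ (by positivity) (by norm_num : (0:ℝ) < 2)]
    rw [div_lt_iff₀ hε] at h4
    linarith
  rw [mem_ball]
  have h5 : min (ε / 2) δ₀ ≤ ε / 2 := min_le_left _ _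
  calc dist (zD g A hg hgA (i0 :: t)) p
      ≤ dist (zD g A hg hgA (i0 :: t)) (fb g A hg hgA b) + dist (fb g A hg hgA b) p :=
        dist_triangle _ _ _
    _ = dist (fb g A hg hgA b) (zD g A hg hgA (i0 :: t)) + dist p (fb g A hg hgA b) := by
        rw [dist_comm (zD g A hg hgA (i0 :: t)), dist_comm (fb g A hg hgA b) p]
    _ < rD g A hg hgA (i0 :: t) + min (ε / 2) δ₀ := by linarith
    _ ≤ 1 / (i0 + 1) + ε / 2 := by linarith
    _ < ε / 2 + ε / 2 := by linarith
    _ = ε := by ring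

lemma range_fb_closed (hnc : ¬ IsSigmaCompact A) {p : P} (hpA : p ∈ A)
    (hp : p ∈ closure (Set.range (fb g A hg hgA))) :
    ∃ b, fb g A hg hgA b = p := by
  have h0 : p ∈ closure (fb g A hg hgA '' Ext ([] : List ℕ)) := by
    rwa [Ext_nil, Set.image_univ]
  let T : ℕ → {t : List ℕ // p ∈ closure (fb g A hg hgA '' Ext t)} := fun n =>
    Nat.rec ⟨[], h0⟩ (fun _ pr =>
      ⟨(cstep g A hg hgA hnc hpA pr.1 pr.2).choose :: pr.1,
        (cstep g A hg hgA hnc hpA pr.1 pr.2).choose_spec⟩) n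
  have hTsucc : ∀ n, (T (n + 1)).1
      = (cstep g A hg hgA hnc hpA (T n).1 (T n).2).choose :: (T n).1 := fun n => rfl
  have hTlen : ∀ n, (T n).1.length = n := by
    intro n
    induction n with
    | zero => rfl
    | succ n ih => rw [hTsucc n]; simp [ih]
  set b : ℕ → ℕ := fun n => ((T (n + 1)).1).headD 0 with hb
  have hidx : ∀ n, idxL b n = (T n).1 := by
    intro n
    induction n with
    | zero => rfl
    | succ n ih =>
      show b n :: idxL b n = (T (n + 1)).1
      rw [ih, hTsucc n, hb]
      simp [hTsucc n]
  refine ⟨b, ?_⟩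
  have key : ∀ n : ℕ, dist p (fb g A hg hgA b) ≤ 2 * rD g A hg hgA (idxL b (n + 1)) := by
    intro n
    have h1 : p ∈ closure (fb g A hg hgA '' Ext (idxL b (n + 1))) := by
      rw [hidx]; exact (T (n + 1)).2
    have h2 : closure (fb g A hg hgA '' Ext (idxL b (n + 1)))
        ⊆ closedBall (zD g A hg hgA (idxL b (n + 1))) (rD g A hg hgA (idxL b (n + 1))) := by
      have hsb := fb_img_sub g A hg hgA hnc (idxL b n) (b n)
      exact (closure_mono hsb).trans Metric.closure_ball_subset_closedBall
    have h3 := fb_mem_ball g A hg hgA hnc b n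
    have h4 := h2 h1
    rw [mem_closedBall] at h4
    rw [mem_ball] at h3
    calc dist p (fb g A hg hgA b)
        ≤ dist p (zD g A hg hgA (idxL b (n + 1)))
          + dist (zD g A hg hgA (idxL b (n + 1))) (fb g A hg hgA b) := dist_triangle _ _ _
      _ ≤ rD g A hg hgA (idxL b (n + 1)) + rD g A hg hgA (idxL b (n + 1)) := by
          rw [dist_comm (zD g A hg hgA (idxL b (n + 1)))]
          exact add_le_add h4 h3.le
      _ = 2 * rD g A hg hgA (idxL b (n + 1)) := by ring
  have hrb : ∀ n : ℕ, rD g A hg hgA (idxL b (n + 1)) ≤ (1/2 : ℝ) ^ (n + 1) := by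
    intro n
    have h := (Dspec g A hg hgA hnc (idxL b n)).rle (b n)
    rwa [idxL_len] at h
  have hle : ∀ n : ℕ, dist p (fb g A hg hgA b) ≤ 2 * (1/2 : ℝ) ^ (n + 1) := by
    intro n
    refine (key n).trans ?_
    have := hrb n
    linarith
  have htend : Tendsto (fun n : ℕ => 2 * (1/2 : ℝ) ^ (n + 1)) atTop (nhds 0) := by
    have h1 : Tendsto (fun n : ℕ => (1/2 : ℝ) ^ n) atTop (nhds 0) :=
      tendsto_pow_atTop_nhds_zero_of_lt_one (by norm_num) (by norm_num)
    have h2 : Tendsto (fun n : ℕ => (1/2 : ℝ) ^ (n + 1)) atTop (nhds 0) :=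
      h1.comp (tendsto_add_atTop_nat 1)
    have h3 := h2.const_mul (2 : ℝ)
    simpa using h3
  have h0' : dist p (fb g A hg hgA b) ≤ 0 := ge_of_tendsto' htend hle
  have := dist_le_zero.mp h0'
  exact this.symm

noncomputable def cfn (n : ℕ) (s : Set ↥A) : List ℕ :=
  if h : ∃ t : List ℕ, t.length = n + 1
      ∧ s = Subtype.val ⁻¹' ball (zD g A hg hgA t) (rD g A hg hgA t) then h.choose else []

lemma cfn_spec {n : ℕ} {s : Set ↥A}
    (h : ∃ t : List ℕ, t.length = n + 1
      ∧ s = Subtype.val ⁻¹' ball (zD g A hg hgA t) (rD g A hg hgA t)) :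
    (cfn g A hg hgA n s).length = n + 1
      ∧ s = Subtype.val ⁻¹' ball (zD g A hg hgA (cfn g A hg hgA n s))
          (rD g A hg hgA (cfn g A hg hgA n s)) := by
  rw [cfn, dif_pos h]
  exact h.choose_spec

end Construction

/-- The main dichotomy: if `↥A` is Menger and `A` is an analytic subset (a continuous
image of the Baire space), then `A` is σ-compact. -/
theorem core (hg : Continuous g) (hgA : Set.range g = A) (hM : MengerSpace ↥A) :
    IsSigmaCompact A := by
  classical
  by_contra hnc
  set fb' : (ℕ → ℕ) → ↥A := fun b => ⟨fb g A hg hgA b, fb_mem_A g A hg hgA b⟩ with hfb'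
  have hval : ∀ b, (fb' b : P) = fb g A hg hgA b := fun b => rfl
  have hcl : IsClosed (Set.range fb') := by
    rw [← closure_subset_iff_isClosed]
    intro a ha
    rw [closure_subtype] at ha
    have himg : Subtype.val '' Set.range fb' = Set.range (fb g A hg hgA) := by
      ext x
      constructor
      · rintro ⟨y, ⟨b, rfl⟩, rfl⟩
        exact ⟨b, rfl⟩
      · rintro ⟨b, rfl⟩
        exact ⟨fb' b, ⟨b, rfl⟩, rfl⟩
    rw [himg] at ha
    obtain ⟨b, hb⟩ := range_fb_closed g A hg hgA hnc a.2 ha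
    exact ⟨b, Subtype.ext hb⟩
  set W : ℕ → Set (Set ↥A) := fun n => insert ((Set.range fb')ᶜ)
      {s | ∃ t : List ℕ, t.length = n + 1
        ∧ s = Subtype.val ⁻¹' ball (zD g A hg hgA t) (rD g A hg hgA t)} with hW
  have hWo : ∀ n, ∀ s ∈ W n, IsOpen s := by
    intro n s hs
    rcases Set.mem_insert_iff.mp hs with rfl | ⟨t, _, rfl⟩
    · exact hcl.isOpen_compl
    · exact isOpen_ball.preimage continuous_subtype_val
  have hWc : ∀ n, ⋃₀ W n = Set.univ := by
    intro n
    apply Set.eq_univ_of_forall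
    intro a
    by_cases ha : a ∈ Set.range fb'
    · obtain ⟨b, rfl⟩ := ha
      refine ⟨Subtype.val ⁻¹' ball (zD g A hg hgA (idxL b (n + 1))) (rD g A hg hgA (idxL b (n + 1))),
        Set.mem_insert_iff.mpr (Or.inr ⟨idxL b (n + 1), idxL_len b (n + 1), rfl⟩), ?_⟩
      show (fb' b : P) ∈ ball (zD g A hg hgA (idxL b (n + 1))) (rD g A hg hgA (idxL b (n + 1)))
      rw [hval]
      exact fb_mem_ball g A hg hgA hnc b n
    · exact ⟨(Set.range fb')ᶜ, Set.mem_insert _ _, ha⟩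
  obtain ⟨V, hV1, hV2⟩ := hM W hWo hWc
  set bb : ℕ → ℕ := fun n =>
    ((hV1 n).2.toFinset.sup (fun s => (cfn g A hg hgA n s).headD 0)) + 1 with hbb
  have hcov : fb' bb ∈ ⋃₀ ⋃ n, V n := by rw [hV2]; exact Set.mem_univ _
  obtain ⟨s, hs, hmem⟩ := hcov
  obtain ⟨n, hsn⟩ := Set.mem_iUnion.mp hs
  have hsW : s ∈ W n := (hV1 n).1 hsn
  rcases Set.mem_insert_iff.mp hsW with rfl | h
  · exact hmem (Set.mem_range_self bb)
  · have hspec := cfn_spec g A hg hgA h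
    set t0 := cfn g A hg hgA n s with ht0
    have h1 : fb g A hg hgA bb ∈ ball (zD g A hg hgA t0) (rD g A hg hgA t0) := by
      have := hmem
      rw [hspec.2] at this
      exact this
    have h2 : fb g A hg hgA bb
        ∈ ball (zD g A hg hgA (idxL bb (n + 1))) (rD g A hg hgA (idxL bb (n + 1))) :=
      fb_mem_ball g A hg hgA hnc bb n
    have heq : t0 = idxL bb (n + 1) := by
      by_contra hne
      exact Set.disjoint_left.mp
        (lvl_disj g A hg hgA hnc n t0 (idxL bb (n + 1)) hspec.1 (idxL_len bb (n + 1)) hne)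
        h1 h2
    have hhead : t0.headD 0 = bb n := by rw [heq]; rfl
    have hle : (cfn g A hg hgA n s).headD 0
        ≤ (hV1 n).2.toFinset.sup (fun s => (cfn g A hg hgA n s).headD 0) :=
      Finset.le_sup (f := fun s => (cfn g A hg hgA n s).headD 0)
        ((hV1 n).2.mem_toFinset.mpr hsn)
    rw [← ht0, hhead] at hle
    have hbbn : bb n = ((hV1 n).2.toFinset.sup (fun s => (cfn g A hg hgA n s).headD 0)) + 1 := rfl
    omega

end Core

/-- A continuous image of a Menger space is Menger. -/
lemma menger_image {X Y : Type*} [TopologicalSpace X] [TopologicalSpace Y]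
    (hM : MengerSpace X) {f : X → Y} (hf : Continuous f) (hs : Surjective f) :
    MengerSpace Y := by
  intro U hUo hUc
  obtain ⟨V', hV'1, hV'2⟩ := hM (fun n => (f ⁻¹' ·) '' U n)
    (by rintro n - ⟨u, hu, rfl⟩; exact (hUo n u hu).preimage hf)
    (by
      intro n
      apply Set.eq_univ_of_forall
      intro x
      have hx : f x ∈ ⋃₀ U n := by rw [hUc n]; exact Set.mem_univ _
      obtain ⟨u, hu, hxu⟩ := hx
      exact ⟨f ⁻¹' u, ⟨u, hu, rfl⟩, hxu⟩)
  refine ⟨fun n => {u | u ∈ U n ∧ f ⁻¹' u ∈ V' n}, fun n => ⟨fun u hu => hu.1, ?_⟩, ?_⟩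
  · have hinj : Injective (f ⁻¹' · : Set Y → Set X) := Set.preimage_injective.mpr hs
    have hsub : {u | u ∈ U n ∧ f ⁻¹' u ∈ V' n} ⊆ (f ⁻¹' ·) ⁻¹' (V' n) := fun u hu => hu.2
    exact (Set.Finite.preimage hinj.injOn (hV'1 n).2).subset hsub
  · apply Set.eq_univ_of_forall
    intro y
    obtain ⟨x, rfl⟩ := hs y
    have hx : x ∈ ⋃₀ ⋃ n, V' n := by rw [hV'2]; exact Set.mem_univ _
    obtain ⟨v, hv, hxv⟩ := hx
    obtain ⟨n, hvn⟩ := Set.mem_iUnion.mp hv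
    obtain ⟨u, hu, rfl⟩ := (hV'1 n).1 hvn
    exact ⟨u, Set.mem_iUnion.mpr ⟨n, hu, hvn⟩, hxv⟩

end MengerAux

/-- Menger proper K-analytic spaces are σ-compact. -/
theorem menger_properKAnalytic_sigmaCompact
    (X : Type u) [TopologicalSpace X] [T35Space X]
    (hM : MengerSpace X) (hK : ProperKAnalytic X) : SigmaCompactSpace X := by
  classical
  obtain ⟨A, hAan, f, hfp, hfs⟩ := hK
  letI : MetricSpace (ℕ → ℝ) := TopologicalSpace.metrizableSpaceMetric (ℕ → ℝ)
  obtain ⟨g₀, hg₀c, hg₀s⟩ := hAan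
  set g : (ℕ → ℕ) → (ℕ → ℝ) := fun b => (g₀ b : ℕ → ℝ) with hg
  have hgc : Continuous g := continuous_subtype_val.comp hg₀c
  have hgA : Set.range g = A := by
    ext x
    constructor
    · rintro ⟨b, rfl⟩
      exact (g₀ b).2
    · intro hx
      obtain ⟨b, hb⟩ := hg₀s ⟨x, hx⟩
      exact ⟨b, by rw [hg]; simp [hb]⟩
  have hMA : MengerSpace ↥A := MengerAux.menger_image hM hfp.1 hfs
  have hsig : IsSigmaCompact A := MengerAux.core g A hgc hgA hMA
  obtain ⟨K, hKc, hKu⟩ := hsig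
  have hproper : IsProperMap f :=
    isProperMap_iff_isClosedMap_and_compact_fibers.mpr ⟨hfp.1, hfp.2.1, hfp.2.2⟩
  have hKsub : ∀ n, K n ⊆ A := fun n => hKu ▸ Set.subset_iUnion K n
  refine ⟨⟨fun n => f ⁻¹' (Subtype.val ⁻¹' K n), fun n => hproper.isCompact_preimage ?_, ?_⟩⟩
  · rw [Topology.IsEmbedding.subtypeVal.isCompact_iff]
    have himg : Subtype.val '' (Subtype.val ⁻¹' K n : Set ↥A) = K n := by
      rw [Set.image_preimage_eq_inter_range, Subtype.range_coe]
      exact Set.inter_eq_left.mpr (hKsub n)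
    rw [himg]
    exact hKc n
  · apply Set.eq_univ_of_forall
    intro x
    have hx : ((f x : ↥A) : ℕ → ℝ) ∈ ⋃ n, K n := by rw [hKu]; exact (f x).2
    obtain ⟨n, hn⟩ := Set.mem_iUnion.mp hx
    exact Set.mem_iUnion.mpr ⟨n, hn⟩
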